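/- In the setting of the previous lemma (f a polynomial relative invariant of weight ψ, U a sum of weight spaces with f|_U ≢ 0), there exists a sum of weight spaces U' ⊆ U such that f|_{U'} ≢ 0 and ψ ∈ ℝ_{>0}Ψ_{U'}, i.e., ψ is a linear combination of the weights of U' with all coefficients strictly positive. -/

import Mathlib

open MvPolynomial

lemma coeff_aeval_smulX {F : Type*} [CommRing F] {J : Type*} [Fintype J] [DecidableEq J]
    (g : J → F) (f : MvPolynomial J F) (m : J →₀ ℕ) :
    coeff m (aeval (fun j => g j • (X j : MvPolynomial J F)) f)
      = (∏ j, g j ^ m j) * coeff m f := by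
  induction f using MvPolynomial.induction_on' with
  | add p q hp hq => rw [map_add, coeff_add, coeff_add, hp, hq]; ring
  | monomial m' c =>
    have h1 : (aeval (fun j => g j • (X j : MvPolynomial J F))) (monomial m' c)
        = monomial m' (c * ∏ j, g j ^ m' j) := by
      rw [aeval_monomial, Finsupp.prod_fintype _ _ (fun j => pow_zero _),
        monomial_eq, Finsupp.prod_fintype _ _ (fun j => pow_zero _)]
      simp only [smul_pow, smul_eq_C_mul, mul_pow, Finset.prod_mul_distrib, map_mul, map_prod, map_pow,
        algebraMap_eq]
      ring
    rw [h1, coeff_monomial, coeff_monomial]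
    split_ifs with h
    · subst h; ring
    · ring

lemma two_zpow_inj {F : Type*} [Field F] [CharZero F] {a b : ℤ}
    (h : (2 : F) ^ a = (2 : F) ^ b) : a = b := by
  have h2 : (2 : F) = algebraMap ℚ F 2 := by norm_num
  rw [h2, ← map_zpow₀, ← map_zpow₀] at h
  have := (algebraMap ℚ F).injective h
  exact zpow_right_injective₀ (by norm_num) (by norm_num) this

lemma zpow_prod_of_ne_zero {F : Type*} [Field F] {x : F} (hx : x ≠ 0) {J : Type*}
    (s : Finset J) (e : J → ℤ) :
    ∏ j ∈ s, x ^ e j = x ^ (∑ j ∈ s, e j) := by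
  classical
  induction s using Finset.induction with
  | empty => simp
  | insert _ _ h ih =>
      rw [Finset.prod_insert h, Finset.sum_insert h, zpow_add₀ hx, ih]

lemma support_weight_eq {F : Type*} [Field F] [CharZero F] {J : Type*} [Fintype J]
    [DecidableEq J] {r : ℕ}
    (wt : J → (Fin r → ℤ)) (ψ : Fin r → ℤ) (f : MvPolynomial J F)
    (hrel : ∀ t : Fin r → Fˣ,
      aeval (fun j : J => (↑(∏ i, t i ^ wt j i) : F) • (X j : MvPolynomial J F)) f
        = (↑(∏ i, t i ^ ψ i) : F) • f)
    {m : J →₀ ℕ} (hm : coeff m f ≠ 0) (i : Fin r) :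
    ∑ j, (m j : ℤ) * wt j i = ψ i := by
  set u : Fˣ := Units.mk0 (2:F) two_ne_zero with hu
  have hprod : ∀ w : Fin r → ℤ,
      (∏ i', (if i' = i then u else 1) ^ w i') = u ^ w i := fun w => by
    rw [Finset.prod_eq_single i (fun b _ hb => by simp [if_neg hb]) (by simp)]
    simp
  have h := hrel (fun i' => if i' = i then u else 1)
  simp only [hprod] at h
  have h2 := congrArg (coeff m) h
  rw [coeff_aeval_smulX, MvPolynomial.coeff_smul, smul_eq_mul] at h2
  have h3 : (∏ j, ((u ^ wt j i : Fˣ) : F) ^ m j) = ((u ^ ψ i : Fˣ) : F) :=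
    mul_right_cancel₀ hm h2
  have hval : ∀ z : ℤ, ((u ^ z : Fˣ) : F) = (2:F) ^ z := by
    intro z; rw [Units.val_zpow_eq_zpow_val]; simp [hu]
  have h4 : (2:F) ^ (∑ j, wt j i * (m j : ℤ)) = (2:F) ^ ψ i := by
    rw [← zpow_prod_of_ne_zero (two_ne_zero) Finset.univ, ← hval]
    rw [← h3]
    refine Finset.prod_congr rfl fun j _ => ?_
    rw [hval, zpow_mul, zpow_natCast]
  have h5 := two_zpow_inj h4
  rw [← h5]
  refine Finset.sum_congr rfl fun j _ => mul_comm _ _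


/-- In the setting of the previous lemma (a split torus `T₀ ≅ 𝔾ₘʳ` acting on `V` with
weight basis indexed by `J`, `f` a polynomial relative invariant of weight `ψ`, and `U` a
sum of weight spaces given by a weight-closed subset `S` of the basis with `f|_U ≢ 0`),
there exists a sum of weight spaces `U' ⊆ U` (given by a weight-closed subset `S' ⊆ S`)
such that `f|_{U'} ≢ 0` and `ψ ∈ ℝ_{>0} Ψ_{U'}`, i.e. `ψ` is a linear combination of the
weights of `U'` with all coefficients strictly positive. -/
theorem relative_invariant_weight_positive_combination
    {F : Type*} [Field F] [CharZero F] {J : Type*} [Fintype J] [DecidableEq J] {r : ℕ}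
    (wt : J → (Fin r → ℤ)) (ψ : Fin r → ℤ)
    (f : MvPolynomial J F) (hf : f ≠ 0)
    (hrel : ∀ t : Fin r → Fˣ,
      aeval (fun j : J => (↑(∏ i, t i ^ wt j i) : F) • (X j : MvPolynomial J F)) f
        = (↑(∏ i, t i ^ ψ i) : F) • f)
    (S : Finset J) (hSweight : ∀ j ∈ S, ∀ j' : J, wt j' = wt j → j' ∈ S)
    (hfU : aeval (fun j : J => if j ∈ S then (X j : MvPolynomial J F) else 0) f ≠ 0) :
    ∃ S' : Finset J, S' ⊆ S ∧ (∀ j ∈ S', ∀ j' : J, wt j' = wt j → j' ∈ S') ∧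
      aeval (fun j : J => if j ∈ S' then (X j : MvPolynomial J F) else 0) f ≠ 0 ∧
      ∃ c : J → ℝ, (∀ j ∈ S', 0 < c j) ∧
        (fun i : Fin r => (ψ i : ℝ)) = ∑ j ∈ S', c j • (fun i : Fin r => (wt j i : ℝ)) := by
  classical
  have hres : ∀ (T : Finset J), (fun j : J => if j ∈ T then (X j : MvPolynomial J F) else 0)
      = fun j => (if j ∈ T then (1:F) else 0) • X j := by
    intro T; funext j; split_ifs <;> simp
  obtain ⟨m, hm⟩ := (MvPolynomial.support_nonempty.2 hfU)
  rw [MvPolynomial.mem_support_iff] at hm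
  rw [hres S, coeff_aeval_smulX] at hm
  have hmf : coeff m f ≠ 0 := right_ne_zero_of_mul hm
  have hprodne := left_ne_zero_of_mul hm
  have hsuppS : ∀ j, m j ≠ 0 → j ∈ S := by
    intro j hj
    by_contra hjS
    exact hprodne (Finset.prod_eq_zero (Finset.mem_univ j) (by rw [if_neg hjS, zero_pow hj]))
  set S' : Finset J := S.filter (fun j => ∃ j', m j' ≠ 0 ∧ wt j' = wt j) with hS'
  have hsuppS' : ∀ j, m j ≠ 0 → j ∈ S' :=
    fun j hj => Finset.mem_filter.2 ⟨hsuppS j hj, j, hj, rfl⟩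
  have hψ : ∀ i, ∑ j, (m j : ℤ) * wt j i = ψ i := support_weight_eq wt ψ f hrel hmf
  refine ⟨S', Finset.filter_subset _ _, ?_, ?_, ?_⟩
  · intro j hj j' hw
    obtain ⟨hjS, j₀, hj₀, hwt₀⟩ := Finset.mem_filter.1 hj
    exact Finset.mem_filter.2 ⟨hSweight j hjS j' hw, j₀, hj₀, hwt₀.trans hw.symm⟩
  · have hcoe : coeff m (aeval (fun j : J => if j ∈ S' then (X j : MvPolynomial J F) else 0) f)
        = coeff m f := by
      rw [hres S', coeff_aeval_smulX]
      have h1 : ∏ j, (if j ∈ S' then (1:F) else 0) ^ m j = 1 :=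
        Finset.prod_eq_one fun j _ => by
          by_cases hj : j ∈ S'
          · simp [hj]
          · have hmj : m j = 0 := by
              by_contra h; exact hj (hsuppS' j h)
            simp [hj, hmj]
      rw [h1, one_mul]
    intro h0
    rw [h0, coeff_zero] at hcoe
    exact hmf hcoe.symm
  · refine ⟨fun j => (∑ j' ∈ S'.filter (fun j'' => wt j'' = wt j), (m j' : ℝ)) /
      ((S'.filter (fun j'' => wt j'' = wt j)).card : ℝ), ?_, ?_⟩
    · intro j hj
      obtain ⟨hjS, j₀, hj₀, hwt₀⟩ := Finset.mem_filter.1 hj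
      have hj₀m : j₀ ∈ S'.filter (fun j'' => wt j'' = wt j) :=
        Finset.mem_filter.2 ⟨hsuppS' j₀ hj₀, hwt₀⟩
      refine div_pos (Finset.sum_pos' (fun _ _ => Nat.cast_nonneg _)
        ⟨j₀, hj₀m, Nat.cast_pos.2 (Nat.pos_of_ne_zero hj₀)⟩) ?_
      exact Nat.cast_pos.2 (Finset.card_pos.2 ⟨j, Finset.mem_filter.2 ⟨hj, rfl⟩⟩)
    · funext i
      simp only [Finset.sum_apply, Pi.smul_apply, smul_eq_mul]
      have hA : (ψ i : ℝ) = ∑ j, (m j : ℝ) * (wt j i : ℝ) := by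
        rw [← hψ i]; push_cast; ring
      have hB : ∑ j, (m j : ℝ) * (wt j i : ℝ) = ∑ j ∈ S', (m j : ℝ) * (wt j i : ℝ) := by
        refine (Finset.sum_subset (Finset.subset_univ S') ?_).symm
        intro j _ hj
        have hmj : m j = 0 := by
          by_contra h; exact hj (hsuppS' j h)
        simp [hmj]
      rw [hA, hB]
      have key : ∑ j ∈ S', (∑ j' ∈ S'.filter (fun j'' => wt j'' = wt j), (m j' : ℝ)) /
            ((S'.filter (fun j'' => wt j'' = wt j)).card : ℝ) * (wt j i : ℝ)
          = ∑ j ∈ S', (m j : ℝ) * (wt j i : ℝ) := by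
        calc ∑ j ∈ S', (∑ j' ∈ S'.filter (fun j'' => wt j'' = wt j), (m j' : ℝ)) /
              ((S'.filter (fun j'' => wt j'' = wt j)).card : ℝ) * (wt j i : ℝ)
            = ∑ j ∈ S', ∑ j' ∈ S', (if wt j' = wt j then
                (m j' : ℝ) * (wt j i : ℝ) / ((S'.filter (fun j'' => wt j'' = wt j)).card : ℝ)
                else 0) := by
              refine Finset.sum_congr rfl fun j hj => ?_
              rw [← Finset.sum_filter, div_mul_eq_mul_div, Finset.sum_mul, Finset.sum_div]
          _ = ∑ j' ∈ S', ∑ j ∈ S', (if wt j' = wt j then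
                (m j' : ℝ) * (wt j i : ℝ) / ((S'.filter (fun j'' => wt j'' = wt j)).card : ℝ)
                else 0) := Finset.sum_comm
          _ = ∑ j' ∈ S', (m j' : ℝ) * (wt j' i : ℝ) := by
              refine Finset.sum_congr rfl fun j' hj' => ?_
              have step : ∀ j ∈ S', (if wt j' = wt j then
                  (m j' : ℝ) * (wt j i : ℝ) / ((S'.filter (fun j'' => wt j'' = wt j)).card : ℝ)
                  else 0)
                = (if wt j = wt j' then
                  (m j' : ℝ) * (wt j' i : ℝ) / ((S'.filter (fun j'' => wt j'' = wt j')).card : ℝ)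
                  else 0) := by
                intro j _
                by_cases h : wt j' = wt j
                · rw [if_pos h, if_pos h.symm]
                  have he : (wt j i : ℝ) = (wt j' i : ℝ) := by rw [← h]
                  have hfil : S'.filter (fun j'' => wt j'' = wt j)
                      = S'.filter (fun j'' => wt j'' = wt j') := by
                    refine Finset.filter_congr fun j'' _ => ?_
                    rw [← h]
                  rw [he, hfil]
                · rw [if_neg h, if_neg (fun hh => h hh.symm)]
              rw [Finset.sum_congr rfl step, ← Finset.sum_filter, Finset.sum_const,
                nsmul_eq_mul]
              have hn' : ((S'.filter (fun j'' => wt j'' = wt j')).card : ℝ) ≠ 0 := by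
                refine Nat.cast_ne_zero.2 (Finset.card_ne_zero_of_mem
                  (Finset.mem_filter.2 ⟨hj', rfl⟩))
              rw [mul_comm, div_mul_cancel₀ _ hn']
      rw [key]
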